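/- Let Δ ⊂ ℝ³ be the root system of D(2,1;α), namely Δ := {±γ₁, ±γ₂, ±γ₃} ∪ {(s₁γ₁ + s₂γ₂ + s₃γ₃)/2 : s₁, s₂, s₃ ∈ {1, −1}}, where γ₁, γ₂, γ₃ is the standard basis of ℝ³. Set P₀ := {±γ₃} ∪ {(s(γ₁ − γ₂) + tγ₃)/2 : s, t ∈ {1, −1}} ∪ {γ₁, γ₂, (γ₁ + γ₂ + γ₃)/2, (γ₁ + γ₂ − γ₃)/2}. Then a subset P ⊆ Δ is a cominuscule parabolic set of roots of Δ if and only if g(P) = P₀ for some g ∈ S(Δ), where S(Δ) is the group of linear maps of ℝ³ of the form γ_i ↦ ±γ_{σ(i)} for σ ∈ S₃ and arbitrary signs; in particular P₀ is itself a cominuscule parabolic set of roots. -/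

import Mathlib

open Pointwise

/-- A proper subset `P` of a symmetric root set `Δ` is a parabolic set of roots if
`Δ = P ∪ (-P)` and `P` is closed under sums lying in `Δ`. -/
def IsParabolic {V : Type*} [AddCommGroup V] (Δ P : Set V) : Prop :=
  P ⊂ Δ ∧ Δ = P ∪ (-P) ∧ ∀ α ∈ P, ∀ β ∈ P, α + β ∈ Δ → α + β ∈ P

/-- A parabolic set of roots is cominuscule if the sum of any two elements of its
nilradical `N⁺ = P \ (-P)` is not a root. -/
def IsCominuscule {V : Type*} [AddCommGroup V] (Δ P : Set V) : Prop :=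
  IsParabolic Δ P ∧ ∀ α ∈ P \ (-P), ∀ β ∈ P \ (-P), α + β ∉ Δ

namespace D21

/-- The standard basis `γ₁, γ₂, γ₃` of `ℝ³`. -/
noncomputable def γ (i : Fin 3) : Fin 3 → ℝ := Pi.single i 1

/-- The root system of `D(2,1;α)`. -/
noncomputable def Δroot : Set (Fin 3 → ℝ) :=
  {v | ∃ i : Fin 3, v = γ i ∨ v = -γ i} ∪
  {v | ∃ s : Fin 3 → ℝ, (∀ i, s i = 1 ∨ s i = -1) ∧
      v = (2⁻¹ : ℝ) • (s 0 • γ 0 + s 1 • γ 1 + s 2 • γ 2)}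

/-- The cominuscule parabolic set `P₀`. -/
noncomputable def P₀ : Set (Fin 3 → ℝ) :=
  {v | v = γ 2 ∨ v = -γ 2} ∪
  {v | ∃ s t : ℝ, (s = 1 ∨ s = -1) ∧ (t = 1 ∨ t = -1) ∧
      v = (2⁻¹ : ℝ) • (s • (γ 0 - γ 1) + t • γ 2)} ∪
  {v | v = γ 0 ∨ v = γ 1 ∨ v = (2⁻¹ : ℝ) • (γ 0 + γ 1 + γ 2) ∨
      v = (2⁻¹ : ℝ) • (γ 0 + γ 1 - γ 2)}

/-- An element of `S(Δ)`: `γ_i ↦ ±γ_{σ(i)}` for `σ ∈ S₃` and arbitrary signs. -/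
def act (σ : Equiv.Perm (Fin 3)) (s : Fin 3 → ℝ) : (Fin 3 → ℝ) → (Fin 3 → ℝ) :=
  fun v i => s i * v (σ.symm i)

end D21



namespace D21Aux

def negN (j : ℕ) : ℕ := if j < 3 then j + 3 else if j < 6 then j - 3 else 6 + ((j - 6) ^^^ 7)

def addN (a b : ℕ) : Option ℕ :=
  if a < 6 then
    if b < 6 then none
    else
      if (b - 6).testBit (a % 3) = decide (a < 3) then some (6 + ((b - 6) ^^^ (1 <<< (a % 3)))) else none
  else if b < 6 then
      if (a - 6).testBit (b % 3) = decide (b < 3) then some (6 + ((a - 6) ^^^ (1 <<< (b % 3)))) else none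
  else
    let m := 7 ^^^ ((a - 6) ^^^ (b - 6))
    if m = 1 ∨ m = 2 ∨ m = 4 then
      let i := if m = 1 then 0 else if m = 2 then 1 else 2
      if (a - 6).testBit i then some (i + 3) else some i
    else none

/-- Twice the `i`-th coordinate of the `j`-th root, as an integer. -/
def encZ (j i : ℕ) : ℤ :=
  if j < 3 then (if i = j then 2 else 0)
  else if j < 6 then (if i = j - 3 then -2 else 0)
  else if (j - 6).testBit i then -1 else 1

def sZ (m i : ℕ) : ℤ := if m.testBit i then -1 else 1

def perm3 (p i : ℕ) : ℕ :=
  match p, i with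
  | 0, i => i
  | 1, 0 => 0 | 1, 1 => 2 | 1, 2 => 1
  | 2, 0 => 1 | 2, 1 => 0 | 2, 2 => 2
  | 3, 0 => 1 | 3, 1 => 2 | 3, 2 => 0
  | 4, 0 => 2 | 4, 1 => 0 | 4, 2 => 1
  | 5, 0 => 2 | 5, 1 => 1 | 5, 2 => 0
  | _, i => i

def invIdx (p : ℕ) : ℕ := match p with | 3 => 4 | 4 => 3 | p => p

def gIdx (p m j : ℕ) : ℕ :=
  if j < 6 then
    let i := perm3 p (j % 3)
    if decide (j < 3) != m.testBit i then i else i + 3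
  else
    6 + (if m.testBit 0 != (j - 6).testBit (perm3 (invIdx p) 0) then 1 else 0)
      + (if m.testBit 1 != (j - 6).testBit (perm3 (invIdx p) 1) then 2 else 0)
      + (if m.testBit 2 != (j - 6).testBit (perm3 (invIdx p) 2) then 4 else 0)


lemma dec_neg : ∀ j, j < 14 → (negN j < 14 ∧ negN (negN j) = j ∧ negN j ≠ j ∧
    ∀ i, i < 3 → encZ (negN j) i = - encZ j i) := by decide

lemma dec_add_lt : ∀ a, a < 14 → ∀ b, b < 14 →
    (addN a b).all (fun c => decide (c < 14)) = true := by decide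

lemma dec_add : ∀ a, a < 14 → ∀ b, b < 14 → ∀ c, c < 14 →
    (addN a b = some c ↔ ∀ i, i < 3 → encZ c i = encZ a i + encZ b i) := by decide

lemma dec_inj : ∀ j, j < 14 → ∀ j', j' < 14 →
    (∀ i, i < 3 → encZ j i = encZ j' i) → j = j' := by decide

lemma dec_g : ∀ p, p < 6 → ∀ m, m < 8 → ∀ j, j < 14 → (gIdx p m j < 14 ∧
    ∀ i, i < 3 → sZ m i * encZ j (perm3 (invIdx p) i) = encZ (gIdx p m j) i) := by decide

lemma dec_gsurj : ∀ p, p < 6 → ∀ m, m < 8 → ∀ j', j' < 14 →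
    ∃ j, j < 14 ∧ gIdx p m j = j' := by decide

lemma dec_perm_comp : ∀ p, p < 6 → invIdx p < 6 ∧ ∀ x, x < 3 →
    (perm3 p x < 3 ∧ perm3 p (perm3 (invIdx p) x) = x ∧ perm3 (invIdx p) (perm3 p x) = x) := by
  decide

lemma dec_permOf : ∀ f : Fin 3 → Fin 3, Function.Injective f →
    ∃ p, p < 6 ∧ ∀ i : Fin 3, (f i).val = perm3 p i.val := by decide

lemma dec_sZ : ∀ m, m < 8 → ∀ i, i < 3 → sZ m i = 1 ∨ sZ m i = -1 := by decide

def ballB : ℕ → (ℕ → Bool) → Bool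
  | 0, _ => true
  | n+1, f => f n && ballB n f

lemma ballB_iff (f : ℕ → Bool) : ∀ n, ballB n f = true ↔ ∀ i, i < n → f i = true := by
  intro n
  induction n with
  | zero => simp [ballB]
  | succ n ih =>
    simp only [ballB, Bool.and_eq_true, ih]
    constructor
    · rintro ⟨h1, h2⟩ i hi
      rcases Nat.lt_succ_iff_lt_or_eq.1 hi with h | h
      · exact h2 i h
      · exact h ▸ h1
    · intro h
      exact ⟨h n (Nat.lt_succ_self n), fun i hi => h i (Nat.lt_succ_of_lt hi)⟩

def goodB (μ : ℕ → Bool) : Bool :=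
  (!ballB 14 μ) &&
  ballB 14 (fun j => μ j || μ (negN j)) &&
  ballB 14 (fun a => !μ a || ballB 14 (fun b => !μ b || (addN a b).all μ)) &&
  ballB 14 (fun a => !(μ a && !μ (negN a)) ||
    ballB 14 (fun b => !(μ b && !μ (negN b)) || (addN a b).isNone))

def bexB (n : ℕ) (f : ℕ → Bool) : Bool := !ballB n (fun i => !f i)

def findg (μ : ℕ → Bool) : Bool :=
  bexB 6 (fun p => bexB 8 (fun m => ballB 14 (fun j => μ j == Nat.testBit 7655 (gIdx p m j))))

lemma mainA_0 : ballB 1024 (fun t => !goodB (1024 * 0 + t).testBit || findg (1024 * 0 + t).testBit) = true := by decide +kernel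
lemma mainA_1 : ballB 1024 (fun t => !goodB (1024 * 1 + t).testBit || findg (1024 * 1 + t).testBit) = true := by decide +kernel
lemma mainA_2 : ballB 1024 (fun t => !goodB (1024 * 2 + t).testBit || findg (1024 * 2 + t).testBit) = true := by decide +kernel
lemma mainA_3 : ballB 1024 (fun t => !goodB (1024 * 3 + t).testBit || findg (1024 * 3 + t).testBit) = true := by decide +kernel
lemma mainA_4 : ballB 1024 (fun t => !goodB (1024 * 4 + t).testBit || findg (1024 * 4 + t).testBit) = true := by decide +kernel
lemma mainA_5 : ballB 1024 (fun t => !goodB (1024 * 5 + t).testBit || findg (1024 * 5 + t).testBit) = true := by decide +kernel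
lemma mainA_6 : ballB 1024 (fun t => !goodB (1024 * 6 + t).testBit || findg (1024 * 6 + t).testBit) = true := by decide +kernel
lemma mainA_7 : ballB 1024 (fun t => !goodB (1024 * 7 + t).testBit || findg (1024 * 7 + t).testBit) = true := by decide +kernel
lemma mainA_8 : ballB 1024 (fun t => !goodB (1024 * 8 + t).testBit || findg (1024 * 8 + t).testBit) = true := by decide +kernel
lemma mainA_9 : ballB 1024 (fun t => !goodB (1024 * 9 + t).testBit || findg (1024 * 9 + t).testBit) = true := by decide +kernel
lemma mainA_10 : ballB 1024 (fun t => !goodB (1024 * 10 + t).testBit || findg (1024 * 10 + t).testBit) = true := by decide +kernel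
lemma mainA_11 : ballB 1024 (fun t => !goodB (1024 * 11 + t).testBit || findg (1024 * 11 + t).testBit) = true := by decide +kernel
lemma mainA_12 : ballB 1024 (fun t => !goodB (1024 * 12 + t).testBit || findg (1024 * 12 + t).testBit) = true := by decide +kernel
lemma mainA_13 : ballB 1024 (fun t => !goodB (1024 * 13 + t).testBit || findg (1024 * 13 + t).testBit) = true := by decide +kernel
lemma mainA_14 : ballB 1024 (fun t => !goodB (1024 * 14 + t).testBit || findg (1024 * 14 + t).testBit) = true := by decide +kernel
lemma mainA_15 : ballB 1024 (fun t => !goodB (1024 * 15 + t).testBit || findg (1024 * 15 + t).testBit) = true := by decide +kernel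

lemma mainA : ∀ T, T < 16384 → (!goodB T.testBit || findg T.testBit) = true := by
  have hc : ∀ k, k < 16 → ∀ t, t < 1024 →
      (!goodB (1024 * k + t).testBit || findg (1024 * k + t).testBit) = true := by
    intro k hk
    interval_cases k
    · exact fun t ht => (ballB_iff _ 1024).1 mainA_0 t ht
    · exact fun t ht => (ballB_iff _ 1024).1 mainA_1 t ht
    · exact fun t ht => (ballB_iff _ 1024).1 mainA_2 t ht
    · exact fun t ht => (ballB_iff _ 1024).1 mainA_3 t ht
    · exact fun t ht => (ballB_iff _ 1024).1 mainA_4 t ht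
    · exact fun t ht => (ballB_iff _ 1024).1 mainA_5 t ht
    · exact fun t ht => (ballB_iff _ 1024).1 mainA_6 t ht
    · exact fun t ht => (ballB_iff _ 1024).1 mainA_7 t ht
    · exact fun t ht => (ballB_iff _ 1024).1 mainA_8 t ht
    · exact fun t ht => (ballB_iff _ 1024).1 mainA_9 t ht
    · exact fun t ht => (ballB_iff _ 1024).1 mainA_10 t ht
    · exact fun t ht => (ballB_iff _ 1024).1 mainA_11 t ht
    · exact fun t ht => (ballB_iff _ 1024).1 mainA_12 t ht
    · exact fun t ht => (ballB_iff _ 1024).1 mainA_13 t ht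
    · exact fun t ht => (ballB_iff _ 1024).1 mainA_14 t ht
    · exact fun t ht => (ballB_iff _ 1024).1 mainA_15 t ht
  intro T hT
  have e : 1024 * (T / 1024) + T % 1024 = T := by
    omega
  have hq : T / 1024 < 16 := Nat.div_lt_of_lt_mul (by omega)
  have hr : T % 1024 < 1024 := Nat.mod_lt _ (by norm_num)
  rw [← e]
  exact hc _ hq _ hr

lemma mainB0 : goodB (Nat.testBit 7655) = true := by decide +kernel

lemma mainB : ballB 6 (fun p => ballB 8 (fun m =>
    goodB (fun j => Nat.testBit 7655 (gIdx p m j)))) = true := by decide +kernel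

end D21Aux
-- BRIDGE
namespace D21B
open D21 D21Aux

noncomputable def enc (j : ℕ) : Fin 3 → ℝ := fun i => ((encZ j i.val : ℤ) : ℝ) / 2

lemma enc_eq_iff {a b : ℕ} : enc a = enc b ↔ ∀ i, i < 3 → encZ a i = encZ b i := by
  constructor
  · intro h i hi
    have := congrFun h ⟨i, hi⟩
    simp only [enc] at this
    have h2 : ((encZ a i : ℤ) : ℝ) = ((encZ b i : ℤ) : ℝ) := by
      field_simp at this; exact_mod_cast this
    exact_mod_cast h2
  · intro h
    funext i
    simp only [enc, h i.val i.isLt]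

lemma enc_inj {a b : ℕ} (ha : a < 14) (hb : b < 14) (h : enc a = enc b) : a = b :=
  dec_inj a ha b hb (enc_eq_iff.1 h)

lemma enc_neg {j : ℕ} (hj : j < 14) : enc (negN j) = - enc j := by
  funext i
  simp only [enc, Pi.neg_apply]
  rw [(dec_neg j hj).2.2.2 i.val i.isLt]
  push_cast
  ring

lemma enc_add_iff {a b c : ℕ} (ha : a < 14) (hb : b < 14) (hc : c < 14) :
    enc a + enc b = enc c ↔ addN a b = some c := by
  rw [dec_add a ha b hb c hc]
  constructor
  · intro h i hi
    have := congrFun h ⟨i, hi⟩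
    simp only [enc, Pi.add_apply] at this
    have h2 : ((encZ a i + encZ b i : ℤ) : ℝ) = ((encZ c i : ℤ) : ℝ) := by
      push_cast
      field_simp at this ⊢
      linarith
    exact_mod_cast h2.symm
  · intro h
    funext i
    simp only [enc, Pi.add_apply]
    rw [h i.val i.isLt]
    push_cast
    ring



lemma enc_basis (i : Fin 3) : enc i.val = γ i := by
  funext x
  simp only [enc, encZ, γ, Pi.single_apply, i.isLt, if_true]
  rcases eq_or_ne x i with h | h
  · subst h; simp
  · simp [h, Fin.val_eq_val, if_neg]

lemma enc_basis_neg (i : Fin 3) : enc (i.val + 3) = -γ i := by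
  funext x
  have h1 : ¬ (i.val + 3 < 3) := by omega
  have h2 : i.val + 3 < 6 := by have := i.isLt; omega
  simp only [enc, encZ, γ, Pi.single_apply, h1, if_false, h2, if_true, Nat.add_sub_cancel,
    Pi.neg_apply]
  rcases eq_or_ne x i with h | h
  · subst h; simp
  · simp [h, Fin.val_eq_val, if_neg]

lemma sZ_cast (m i : ℕ) : ((sZ m i : ℤ) : ℝ) = 1 ∨ ((sZ m i : ℤ) : ℝ) = -1 := by
  unfold sZ; split_ifs <;> norm_num

lemma enc_half (k : ℕ) :
    enc (6 + k) = (2⁻¹ : ℝ) • (((sZ k 0 : ℤ) : ℝ) • γ 0 + ((sZ k 1 : ℤ) : ℝ) • γ 1 +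
      ((sZ k 2 : ℤ) : ℝ) • γ 2) := by
  funext x
  have h1 : ¬ (6 + k < 3) := by omega
  have h2 : ¬ (6 + k < 6) := by omega
  simp only [enc, encZ, h1, h2, if_false, Nat.add_sub_cancel_left]
  fin_cases x <;>
    simp [γ, sZ, Pi.single_apply] <;>
    split_ifs <;>
    simp_all [Pi.single_apply] <;>
    norm_num

lemma enc_mem_Δ (j : ℕ) (hj : j < 14) : enc j ∈ Δroot := by
  rcases lt_or_ge j 3 with h | h
  · exact Or.inl ⟨⟨j, h⟩, Or.inl (enc_basis ⟨j, h⟩)⟩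
  · rcases lt_or_ge j 6 with h' | h'
    · obtain ⟨t, rfl⟩ : ∃ t, j = t + 3 := ⟨j - 3, by omega⟩
      exact Or.inl ⟨⟨t, by omega⟩, Or.inr (enc_basis_neg ⟨t, by omega⟩)⟩
    · obtain ⟨k, rfl⟩ : ∃ k, j = 6 + k := ⟨j - 6, by omega⟩
      exact Or.inr ⟨fun i => ((sZ k i.val : ℤ) : ℝ), fun i => sZ_cast _ _, enc_half k⟩

lemma mem_Δ {v : Fin 3 → ℝ} : v ∈ Δroot ↔ ∃ j, j < 14 ∧ v = enc j := by
  constructor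
  · rintro (⟨i, h | h⟩ | ⟨s, hs, rfl⟩)
    · exact ⟨i.val, by have := i.isLt; omega, by rw [h, enc_basis]⟩
    · exact ⟨i.val + 3, by have := i.isLt; omega, by rw [h, enc_basis_neg]⟩
    · rcases hs 0 with h0 | h0 <;> rcases hs 1 with h1 | h1 <;> rcases hs 2 with h2 | h2
      · exact ⟨6 + 0, by norm_num, by
          rw [enc_half 0, h0, h1, h2,
            show sZ 0 0 = 1 from by decide, show sZ 0 1 = 1 from by decide,
            show sZ 0 2 = 1 from by decide]; norm_num⟩
      · exact ⟨6 + 4, by norm_num, by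
          rw [enc_half 4, h0, h1, h2,
            show sZ 4 0 = 1 from by decide, show sZ 4 1 = 1 from by decide,
            show sZ 4 2 = -1 from by decide]; norm_num⟩
      · exact ⟨6 + 2, by norm_num, by
          rw [enc_half 2, h0, h1, h2,
            show sZ 2 0 = 1 from by decide, show sZ 2 1 = -1 from by decide,
            show sZ 2 2 = 1 from by decide]; norm_num⟩
      · exact ⟨6 + 6, by norm_num, by
          rw [enc_half 6, h0, h1, h2,
            show sZ 6 0 = 1 from by decide, show sZ 6 1 = -1 from by decide,
            show sZ 6 2 = -1 from by decide]; norm_num⟩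
      · exact ⟨6 + 1, by norm_num, by
          rw [enc_half 1, h0, h1, h2,
            show sZ 1 0 = -1 from by decide, show sZ 1 1 = 1 from by decide,
            show sZ 1 2 = 1 from by decide]; norm_num⟩
      · exact ⟨6 + 5, by norm_num, by
          rw [enc_half 5, h0, h1, h2,
            show sZ 5 0 = -1 from by decide, show sZ 5 1 = 1 from by decide,
            show sZ 5 2 = -1 from by decide]; norm_num⟩
      · exact ⟨6 + 3, by norm_num, by
          rw [enc_half 3, h0, h1, h2,
            show sZ 3 0 = -1 from by decide, show sZ 3 1 = -1 from by decide,
            show sZ 3 2 = 1 from by decide]; norm_num⟩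
      · exact ⟨6 + 7, by norm_num, by
          rw [enc_half 7, h0, h1, h2,
            show sZ 7 0 = -1 from by decide, show sZ 7 1 = -1 from by decide,
            show sZ 7 2 = -1 from by decide]; norm_num⟩
  · rintro ⟨j, hj, rfl⟩
    exact enc_mem_Δ j hj



lemma enc_6 : enc 6 = (2⁻¹ : ℝ) • (γ 0 + γ 1 + γ 2) := by
  have h := enc_half 0
  norm_num [show sZ 0 0 = 1 from by decide, show sZ 0 1 = 1 from by decide,
    show sZ 0 2 = 1 from by decide] at h
  rw [h]; module

lemma enc_10 : enc 10 = (2⁻¹ : ℝ) • (γ 0 + γ 1 - γ 2) := by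
  have h := enc_half 4
  norm_num [show sZ 4 0 = 1 from by decide, show sZ 4 1 = 1 from by decide,
    show sZ 4 2 = -1 from by decide] at h
  rw [h]; module

lemma enc_7 : enc 7 = (2⁻¹ : ℝ) • ((-1 : ℝ) • (γ 0 - γ 1) + (1 : ℝ) • γ 2) := by
  have h := enc_half 1
  norm_num [show sZ 1 0 = -1 from by decide, show sZ 1 1 = 1 from by decide,
    show sZ 1 2 = 1 from by decide] at h
  rw [h]; module

lemma enc_8 : enc 8 = (2⁻¹ : ℝ) • ((1 : ℝ) • (γ 0 - γ 1) + (1 : ℝ) • γ 2) := by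
  have h := enc_half 2
  norm_num [show sZ 2 0 = 1 from by decide, show sZ 2 1 = -1 from by decide,
    show sZ 2 2 = 1 from by decide] at h
  rw [h]; module

lemma enc_11 : enc 11 = (2⁻¹ : ℝ) • ((-1 : ℝ) • (γ 0 - γ 1) + (-1 : ℝ) • γ 2) := by
  have h := enc_half 5
  norm_num [show sZ 5 0 = -1 from by decide, show sZ 5 1 = 1 from by decide,
    show sZ 5 2 = -1 from by decide] at h
  rw [h]; module

lemma enc_12 : enc 12 = (2⁻¹ : ℝ) • ((1 : ℝ) • (γ 0 - γ 1) + (-1 : ℝ) • γ 2) := by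
  have h := enc_half 6
  norm_num [show sZ 6 0 = 1 from by decide, show sZ 6 1 = -1 from by decide,
    show sZ 6 2 = -1 from by decide] at h
  rw [h]; module

lemma mem_P₀ {v : Fin 3 → ℝ} :
    v ∈ P₀ ↔ ∃ j, j < 14 ∧ (7655 : ℕ).testBit j = true ∧ v = enc j := by
  constructor
  · rintro (((h | h) | ⟨s, t, hs, ht, rfl⟩) | (h | h | h | h))
    · exact ⟨2, by norm_num, by decide, by rw [h]; exact (enc_basis 2).symm⟩
    · exact ⟨5, by norm_num, by decide, by rw [h]; exact (enc_basis_neg 2).symm⟩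
    · rcases hs with rfl | rfl <;> rcases ht with rfl | rfl
      · exact ⟨8, by norm_num, by decide, enc_8.symm⟩
      · exact ⟨12, by norm_num, by decide, enc_12.symm⟩
      · exact ⟨7, by norm_num, by decide, enc_7.symm⟩
      · exact ⟨11, by norm_num, by decide, enc_11.symm⟩
    · exact ⟨0, by norm_num, by decide, by rw [h]; exact (enc_basis 0).symm⟩
    · exact ⟨1, by norm_num, by decide, by rw [h]; exact (enc_basis 1).symm⟩
    · exact ⟨6, by norm_num, by decide, by rw [h]; exact enc_6.symm⟩
    · exact ⟨10, by norm_num, by decide, by rw [h]; exact enc_10.symm⟩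
  · rintro ⟨j, hj, hb, rfl⟩
    interval_cases j
    · exact Or.inr (Or.inl (enc_basis 0))
    · exact Or.inr (Or.inr (Or.inl (enc_basis 1)))
    · exact Or.inl (Or.inl (Or.inl (enc_basis 2)))
    · exact absurd hb (by decide)
    · exact absurd hb (by decide)
    · exact Or.inl (Or.inl (Or.inr (enc_basis_neg 2)))
    · exact Or.inr (Or.inr (Or.inr (Or.inl enc_6)))
    · exact Or.inl (Or.inr ⟨-1, 1, Or.inr rfl, Or.inl rfl, enc_7⟩)
    · exact Or.inl (Or.inr ⟨1, 1, Or.inl rfl, Or.inl rfl, enc_8⟩)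
    · exact absurd hb (by decide)
    · exact Or.inr (Or.inr (Or.inr (Or.inr enc_10)))
    · exact Or.inl (Or.inr ⟨-1, -1, Or.inr rfl, Or.inr rfl, enc_11⟩)
    · exact Or.inl (Or.inr ⟨1, -1, Or.inl rfl, Or.inr rfl, enc_12⟩)
    · exact absurd hb (by decide)



def SOf (μ : ℕ → Bool) : Set (Fin 3 → ℝ) := {v | ∃ j, j < 14 ∧ μ j = true ∧ v = enc j}

lemma SOf_subset (μ : ℕ → Bool) : SOf μ ⊆ Δroot := by
  rintro v ⟨j, hj, _, rfl⟩; exact enc_mem_Δ j hj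

lemma mem_SOf {μ : ℕ → Bool} {j : ℕ} (hj : j < 14) : enc j ∈ SOf μ ↔ μ j = true := by
  constructor
  · rintro ⟨j', hj', hμ, he⟩
    rwa [enc_inj hj hj' he]
  · intro h; exact ⟨j, hj, h, rfl⟩

lemma neg_mem_SOf {μ : ℕ → Bool} {j : ℕ} (hj : j < 14) :
    enc j ∈ -SOf μ ↔ μ (negN j) = true := by
  rw [Set.mem_neg, ← enc_neg hj]
  exact mem_SOf (dec_neg j hj).1

lemma addN_some_lt {a b c : ℕ} (ha : a < 14) (hb : b < 14) (h : addN a b = some c) :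
    c < 14 := by
  have := dec_add_lt a ha b hb
  rw [h] at this
  simpa using this

lemma option_all_iff {o : Option ℕ} {f : ℕ → Bool} :
    o.all f = true ↔ ∀ c, o = some c → f c = true := by
  cases o <;> simp [Option.all]

lemma ballB_eq_false {f : ℕ → Bool} {n : ℕ} :
    ballB n f = false ↔ ∃ i, i < n ∧ f i = false := by
  rw [← Bool.not_eq_true, ballB_iff]
  simp

def GoodP (μ : ℕ → Bool) : Prop :=
  (∃ j, j < 14 ∧ μ j = false) ∧
  (∀ j, j < 14 → (μ j = true ∨ μ (negN j) = true)) ∧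
  (∀ a, a < 14 → ∀ b, b < 14 → μ a = true → μ b = true →
    ∀ c, addN a b = some c → μ c = true) ∧
  (∀ a, a < 14 → μ a = true → μ (negN a) = false →
    ∀ b, b < 14 → μ b = true → μ (negN b) = false → addN a b = none)

lemma goodB_iff (μ : ℕ → Bool) : goodB μ = true ↔ GoodP μ := by
  constructor
  · intro h
    simp only [goodB, Bool.and_eq_true] at h
    obtain ⟨⟨⟨h1, h2⟩, h3⟩, h4⟩ := h
    refine ⟨?_, ?_, ?_, ?_⟩
    · rw [Bool.not_eq_true'] at h1
      rcases ballB_eq_false.1 h1 with ⟨j, hj, hμ⟩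
      exact ⟨j, hj, hμ⟩
    · intro j hj
      have := (ballB_iff _ 14).1 h2 j hj
      simpa using this
    · intro a ha b hb hμa hμb c hc
      have hA := (ballB_iff _ 14).1 h3 a ha
      simp only [Bool.or_eq_true, Bool.not_eq_true'] at hA
      rcases hA with h | h
      · rw [hμa] at h; cases h
      · have hB := (ballB_iff _ 14).1 h b hb
        simp only [Bool.or_eq_true, Bool.not_eq_true'] at hB
        rcases hB with h' | h'
        · rw [hμb] at h'; cases h'
        · exact option_all_iff.1 h' c hc
    · intro a ha hμa hna b hb hμb hnb
      have hA := (ballB_iff _ 14).1 h4 a ha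
      simp only [Bool.or_eq_true, Bool.not_eq_true'] at hA
      rcases hA with h | h
      · rw [hμa, hna] at h; simp at h
      · have hB := (ballB_iff _ 14).1 h b hb
        simp only [Bool.or_eq_true, Bool.not_eq_true'] at hB
        rcases hB with h' | h'
        · rw [hμb, hnb] at h'; simp at h'
        · exact Option.isNone_iff_eq_none.1 h'
  · rintro ⟨g1, g2, g3, g4⟩
    simp only [goodB, Bool.and_eq_true]
    refine ⟨⟨⟨?_, ?_⟩, ?_⟩, ?_⟩
    · rcases g1 with ⟨j, hj, hμ⟩
      rw [Bool.not_eq_true']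
      exact ballB_eq_false.2 ⟨j, hj, hμ⟩
    · refine (ballB_iff _ 14).2 fun j hj => ?_
      rcases g2 j hj with h | h <;> simp [h]
    · refine (ballB_iff _ 14).2 fun a ha => ?_
      cases hμa : μ a with
      | false => simp
      | true =>
        simp only [Bool.or_eq_true]
        refine Or.inr ((ballB_iff _ 14).2 fun b hb => ?_)
        cases hμb : μ b with
        | false => simp
        | true =>
          simp only [Bool.or_eq_true]
          exact Or.inr (option_all_iff.2 (g3 a ha b hb hμa hμb))
    · refine (ballB_iff _ 14).2 fun a ha => ?_
      rcases Bool.eq_false_or_eq_true (μ a && !μ (negN a)) with h | h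
      · simp only [Bool.and_eq_true, Bool.not_eq_true'] at h
        simp only [Bool.or_eq_true]
        refine Or.inr ((ballB_iff _ 14).2 fun b hb => ?_)
        rcases Bool.eq_false_or_eq_true (μ b && !μ (negN b)) with h' | h'
        · simp only [Bool.and_eq_true, Bool.not_eq_true'] at h'
          simp only [Bool.or_eq_true]
          refine Or.inr ?_
          rw [g4 a ha h.1 h.2 b hb h'.1 h'.2]
          rfl
        · simp [h']
      · simp [h]

lemma comin_SOf_iff (μ : ℕ → Bool) : IsCominuscule Δroot (SOf μ) ↔ goodB μ = true := by
  rw [goodB_iff]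
  constructor
  · rintro ⟨⟨hss, hcov, hclo⟩, hcom⟩
    refine ⟨?_, ?_, ?_, ?_⟩
    · rcases Set.exists_of_ssubset hss with ⟨v, hvΔ, hvP⟩
      rcases mem_Δ.1 hvΔ with ⟨j, hj, rfl⟩
      refine ⟨j, hj, ?_⟩
      cases h : μ j
      · rfl
      · exact absurd ((mem_SOf hj).2 h) hvP
    · intro j hj
      have hmem : enc j ∈ Δroot := enc_mem_Δ j hj
      rw [hcov] at hmem
      rcases hmem with h | h
      · exact Or.inl ((mem_SOf hj).1 h)
      · exact Or.inr ((neg_mem_SOf hj).1 h)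
    · intro a ha b hb hμa hμb c hc
      have hlt := addN_some_lt ha hb hc
      have he := (enc_add_iff ha hb hlt).2 hc
      have hcΔ : enc a + enc b ∈ Δroot := by rw [he]; exact enc_mem_Δ c hlt
      have hmem := hclo (enc a) ((mem_SOf ha).2 hμa) (enc b) ((mem_SOf hb).2 hμb) hcΔ
      rw [he] at hmem
      exact (mem_SOf hlt).1 hmem
    · intro a ha hμa hna b hb hμb hnb
      by_contra hne
      rcases Option.ne_none_iff_exists'.1 hne with ⟨c, hc⟩
      have hlt := addN_some_lt ha hb hc
      have he := (enc_add_iff ha hb hlt).2 hc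
      have hsum : enc a + enc b ∈ Δroot := by rw [he]; exact enc_mem_Δ c hlt
      refine hcom (enc a) ⟨(mem_SOf ha).2 hμa, ?_⟩ (enc b) ⟨(mem_SOf hb).2 hμb, ?_⟩ hsum
      · intro h
        rw [neg_mem_SOf ha] at h
        rw [h] at hna; cases hna
      · intro h
        rw [neg_mem_SOf hb] at h
        rw [h] at hnb; cases hnb
  · rintro ⟨g1, g2, g3, g4⟩
    refine ⟨⟨?_, ?_, ?_⟩, ?_⟩
    · rw [Set.ssubset_def]
      refine ⟨SOf_subset μ, fun hsub => ?_⟩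
      rcases g1 with ⟨j, hj, hμ⟩
      have := (mem_SOf (μ := μ) hj).1 (hsub (enc_mem_Δ j hj))
      rw [this] at hμ; cases hμ
    · ext v
      constructor
      · intro hv
        rcases mem_Δ.1 hv with ⟨j, hj, rfl⟩
        rcases g2 j hj with h | h
        · exact Or.inl ((mem_SOf hj).2 h)
        · exact Or.inr ((neg_mem_SOf hj).2 h)
      · rintro (h | h)
        · exact SOf_subset μ h
        · rw [Set.mem_neg] at h
          rcases h with ⟨j, hj, hμ, he⟩
          have hv : v = enc (negN j) := by
            rw [enc_neg hj, ← he]; simp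
          rw [hv]
          exact enc_mem_Δ _ (dec_neg j hj).1
    · rintro α ⟨a, ha, hμa, rfl⟩ β ⟨b, hb, hμb, rfl⟩ hsum
      rcases mem_Δ.1 hsum with ⟨c, hc, he⟩
      have hsome := (enc_add_iff ha hb hc).1 he
      rw [he]
      exact (mem_SOf hc).2 (g3 a ha b hb hμa hμb c hsome)
    · rintro α ⟨hα, hαn⟩ β ⟨hβ, hβn⟩ hsum
      rcases hα with ⟨a, ha, hμa, rfl⟩
      rcases hβ with ⟨b, hb, hμb, rfl⟩
      rcases mem_Δ.1 hsum with ⟨c, hc, he⟩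
      have hsome := (enc_add_iff ha hb hc).1 he
      have hna : μ (negN a) = false := by
        cases h : μ (negN a)
        · rfl
        · exact absurd ((neg_mem_SOf ha).2 h) hαn
      have hnb : μ (negN b) = false := by
        cases h : μ (negN b)
        · rfl
        · exact absurd ((neg_mem_SOf hb).2 h) hβn
      rw [g4 a ha hμa hna b hb hμb hnb] at hsome
      cases hsome



lemma bexB_iff {n : ℕ} {f : ℕ → Bool} : bexB n f = true ↔ ∃ i, i < n ∧ f i = true := by
  unfold bexB
  rw [Bool.not_eq_true', ballB_eq_false]
  simp

lemma findg_iff {μ : ℕ → Bool} : findg μ = true ↔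
    ∃ p, p < 6 ∧ ∃ m, m < 8 ∧ ∀ j, j < 14 → μ j = Nat.testBit 7655 (gIdx p m j) := by
  unfold findg
  rw [bexB_iff]
  constructor
  · rintro ⟨p, hp, h⟩
    rcases bexB_iff.1 h with ⟨m, hm, h'⟩
    refine ⟨p, hp, m, hm, fun j hj => ?_⟩
    exact eq_of_beq ((ballB_iff _ 14).1 h' j hj)
  · rintro ⟨p, hp, m, hm, h⟩
    refine ⟨p, hp, bexB_iff.2 ⟨m, hm, (ballB_iff _ 14).2 fun j hj => ?_⟩⟩
    rw [h j hj]
    exact beq_self_eq_true _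

lemma goodP_congr {μ ν : ℕ → Bool} (h : ∀ j, j < 14 → ν j = μ j) (hg : GoodP μ) : GoodP ν := by
  obtain ⟨g1, g2, g3, g4⟩ := hg
  refine ⟨?_, ?_, ?_, ?_⟩
  · rcases g1 with ⟨j, hj, hb⟩
    exact ⟨j, hj, by rw [h j hj]; exact hb⟩
  · intro j hj
    rw [h j hj, h (negN j) (dec_neg j hj).1]
    exact g2 j hj
  · intro a ha b hb ha' hb' c hc
    rw [h a ha] at ha'
    rw [h b hb] at hb'
    rw [h c (addN_some_lt ha hb hc)]
    exact g3 a ha b hb ha' hb' c hc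
  · intro a ha ha' hna b hb hb' hnb
    rw [h a ha] at ha'
    rw [h b hb] at hb'
    rw [h (negN a) (dec_neg a ha).1] at hna
    rw [h (negN b) (dec_neg b hb).1] at hnb
    exact g4 a ha ha' hna b hb hb' hnb

lemma act_inj (σ : Equiv.Perm (Fin 3)) (s : Fin 3 → ℝ) (hs : ∀ i, s i = 1 ∨ s i = -1) :
    Function.Injective (act σ s) := by
  intro v w h
  funext x
  have hx := congrFun h (σ x)
  simp only [act, Equiv.symm_apply_apply] at hx
  rcases hs (σ x) with h' | h' <;> rw [h'] at hx <;> linarith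

lemma exists_p (σ : Equiv.Perm (Fin 3)) :
    ∃ p, p < 6 ∧ ∀ i : Fin 3, (σ i).val = perm3 p i.val :=
  dec_permOf (fun i => σ i) σ.injective

lemma symm_val {σ : Equiv.Perm (Fin 3)} {p : ℕ} (hp : p < 6)
    (hσ : ∀ i : Fin 3, (σ i).val = perm3 p i.val) (i : Fin 3) :
    (σ.symm i).val = perm3 (invIdx p) i.val := by
  have h1 := hσ (σ.symm i)
  rw [Equiv.apply_symm_apply] at h1
  have h2 := ((dec_perm_comp p hp).2 (σ.symm i).val (σ.symm i).isLt).2.2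
  rw [← h1] at h2
  exact h2.symm

lemma exists_m (s : Fin 3 → ℝ) (hs : ∀ i, s i = 1 ∨ s i = -1) :
    ∃ m, m < 8 ∧ ∀ i : Fin 3, s i = ((sZ m i.val : ℤ) : ℝ) := by
  rcases hs 0 with h0 | h0 <;> rcases hs 1 with h1 | h1 <;> rcases hs 2 with h2 | h2
  · exact ⟨0, by norm_num, fun i => by
      fin_cases i <;> simp [h0, h1, h2, show sZ 0 0 = 1 from by decide,
        show sZ 0 1 = 1 from by decide, show sZ 0 2 = 1 from by decide]⟩
  · exact ⟨4, by norm_num, fun i => by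
      fin_cases i <;> simp [h0, h1, h2, show sZ 4 0 = 1 from by decide,
        show sZ 4 1 = 1 from by decide, show sZ 4 2 = -1 from by decide]⟩
  · exact ⟨2, by norm_num, fun i => by
      fin_cases i <;> simp [h0, h1, h2, show sZ 2 0 = 1 from by decide,
        show sZ 2 1 = -1 from by decide, show sZ 2 2 = 1 from by decide]⟩
  · exact ⟨6, by norm_num, fun i => by
      fin_cases i <;> simp [h0, h1, h2, show sZ 6 0 = 1 from by decide,
        show sZ 6 1 = -1 from by decide, show sZ 6 2 = -1 from by decide]⟩
  · exact ⟨1, by norm_num, fun i => by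
      fin_cases i <;> simp [h0, h1, h2, show sZ 1 0 = -1 from by decide,
        show sZ 1 1 = 1 from by decide, show sZ 1 2 = 1 from by decide]⟩
  · exact ⟨5, by norm_num, fun i => by
      fin_cases i <;> simp [h0, h1, h2, show sZ 5 0 = -1 from by decide,
        show sZ 5 1 = 1 from by decide, show sZ 5 2 = -1 from by decide]⟩
  · exact ⟨3, by norm_num, fun i => by
      fin_cases i <;> simp [h0, h1, h2, show sZ 3 0 = -1 from by decide,
        show sZ 3 1 = -1 from by decide, show sZ 3 2 = 1 from by decide]⟩
  · exact ⟨7, by norm_num, fun i => by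
      fin_cases i <;> simp [h0, h1, h2, show sZ 7 0 = -1 from by decide,
        show sZ 7 1 = -1 from by decide, show sZ 7 2 = -1 from by decide]⟩

lemma exists_σ (p : ℕ) (hp : p < 6) :
    ∃ σ : Equiv.Perm (Fin 3), ∀ i : Fin 3, (σ i).val = perm3 p i.val := by
  have hinv := (dec_perm_comp p hp).1
  refine ⟨⟨fun i => ⟨perm3 p i.val, ((dec_perm_comp p hp).2 i.val i.isLt).1⟩,
    fun i => ⟨perm3 (invIdx p) i.val, ((dec_perm_comp (invIdx p) hinv).2 i.val i.isLt).1⟩,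
    ?_, ?_⟩, fun i => rfl⟩
  · intro i
    apply Fin.ext
    exact ((dec_perm_comp p hp).2 i.val i.isLt).2.2
  · intro i
    apply Fin.ext
    exact ((dec_perm_comp p hp).2 i.val i.isLt).2.1

lemma act_enc {σ : Equiv.Perm (Fin 3)} {s : Fin 3 → ℝ} {p m : ℕ} (hp : p < 6) (hm : m < 8)
    (hσ : ∀ i : Fin 3, (σ i).val = perm3 p i.val)
    (hs : ∀ i : Fin 3, s i = ((sZ m i.val : ℤ) : ℝ))
    {j : ℕ} (hj : j < 14) : act σ s (enc j) = enc (gIdx p m j) := by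
  funext i
  have hz := (dec_g p hp m hm j hj).2 i.val i.isLt
  simp only [act, enc]
  rw [hs i, symm_val hp hσ i, ← hz]
  push_cast
  ring

lemma P₀_eq : P₀ = SOf (Nat.testBit 7655) := Set.ext fun _ => mem_P₀

lemma goodB_g (p m : ℕ) (hp : p < 6) (hm : m < 8) :
    goodB (fun j => Nat.testBit 7655 (gIdx p m j)) = true :=
  (ballB_iff _ 8).1 ((ballB_iff _ 6).1 mainB p hp) m hm

def toMask (μ : ℕ → Bool) : ℕ → ℕ
  | 0 => 0
  | n + 1 => 2 * toMask (fun j => μ (j + 1)) n + (μ 0).toNat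

lemma toMask_lt : ∀ (n : ℕ) (μ : ℕ → Bool), toMask μ n < 2 ^ n := by
  intro n
  induction n with
  | zero => intro μ; simp [toMask]
  | succ n ih =>
    intro μ
    have h := ih (fun j => μ (j + 1))
    have hb : (μ 0).toNat ≤ 1 := by cases μ 0 <;> simp
    simp only [toMask]
    rw [pow_succ]
    omega

lemma toMask_testBit : ∀ (n : ℕ) (μ : ℕ → Bool) (j : ℕ), j < n →
    (toMask μ n).testBit j = μ j := by
  intro n
  induction n with
  | zero => intro μ j hj; omega
  | succ n ih =>
    intro μ j hj
    cases j with
    | zero =>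
      simp only [toMask, Nat.testBit_zero]
      cases h : μ 0 <;> simp [h, Nat.mul_add_mod]
    | succ j =>
      rw [Nat.testBit_add_one]
      have h2 : (2 * toMask (fun j => μ (j + 1)) n + (μ 0).toNat) / 2 =
          toMask (fun j => μ (j + 1)) n := by
        have hb : (μ 0).toNat ≤ 1 := by cases μ 0 <;> simp
        omega
      simp only [toMask]
      rw [h2, ih _ j (by omega)]

end D21B
open D21 D21Aux D21B

theorem stmt_9 (P : Set (Fin 3 → ℝ)) (hP : P ⊆ D21.Δroot) :
    (IsCominuscule D21.Δroot P ↔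
      ∃ (σ : Equiv.Perm (Fin 3)) (s : Fin 3 → ℝ), (∀ i, s i = 1 ∨ s i = -1) ∧
        D21.act σ s '' P = D21.P₀) ∧
    IsCominuscule D21.Δroot D21.P₀ := by
  classical
  have main : IsCominuscule D21.Δroot P ↔
      ∃ (σ : Equiv.Perm (Fin 3)) (s : Fin 3 → ℝ), (∀ i, s i = 1 ∨ s i = -1) ∧
        D21.act σ s '' P = D21.P₀ := by
    constructor
    · intro hC
      set μ : ℕ → Bool := fun j => decide (enc j ∈ P) with hμ
      have hPeq : P = SOf μ := by
        ext v
        constructor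
        · intro hv
          rcases mem_Δ.1 (hP hv) with ⟨j, hj, rfl⟩
          exact ⟨j, hj, decide_eq_true hv, rfl⟩
        · rintro ⟨j, hj, hb, rfl⟩
          exact of_decide_eq_true hb
      have hgood : goodB μ = true := (comin_SOf_iff μ).1 (by rwa [← hPeq])
      have hTlt : toMask μ 14 < 16384 := by
        have := toMask_lt 14 μ
        norm_num at this
        exact this
      have hgoodT : goodB (toMask μ 14).testBit = true := by
        rw [goodB_iff]
        exact goodP_congr (fun j hj => toMask_testBit 14 μ j hj) ((goodB_iff μ).1 hgood)
      have hfindg : findg (toMask μ 14).testBit = true := by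
        have h := mainA (toMask μ 14) hTlt
        rw [hgoodT] at h
        simpa using h
      rcases findg_iff.1 hfindg with ⟨p, hp, m, hm, hf⟩
      have hf' : ∀ j, j < 14 → μ j = Nat.testBit 7655 (gIdx p m j) := fun j hj => by
        rw [← toMask_testBit 14 μ j hj]
        exact hf j hj
      obtain ⟨σ, hσ⟩ := exists_σ p hp
      refine ⟨σ, fun i => ((sZ m i.val : ℤ) : ℝ), fun i => sZ_cast m i.val, ?_⟩
      rw [hPeq, P₀_eq]
      ext v
      constructor
      · rintro ⟨u, ⟨j, hj, hb, rfl⟩, rfl⟩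
        rw [act_enc hp hm hσ (fun i => rfl) hj]
        exact (mem_SOf (dec_g p hp m hm j hj).1).2 (by rw [← hf' j hj]; exact hb)
      · rintro ⟨j', hj', hb', rfl⟩
        rcases dec_gsurj p hp m hm j' hj' with ⟨j, hj, hgj⟩
        refine ⟨enc j, ⟨j, hj, ?_, rfl⟩, ?_⟩
        · rw [hf' j hj, hgj]
          exact hb'
        · rw [act_enc hp hm hσ (fun i => rfl) hj, hgj]
    · rintro ⟨σ, s, hs, himg⟩
      obtain ⟨p, hp, hσ⟩ := exists_p σ
      obtain ⟨m, hm, hsm⟩ := exists_m s hs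
      have hPeq : P = SOf (fun j => Nat.testBit 7655 (gIdx p m j)) := by
        ext v
        constructor
        · intro hv
          rcases mem_Δ.1 (hP hv) with ⟨j, hj, rfl⟩
          refine ⟨j, hj, ?_, rfl⟩
          have h1 : D21.act σ s (enc j) ∈ D21.P₀ := himg ▸ Set.mem_image_of_mem _ hv
          rw [act_enc hp hm hσ hsm hj, P₀_eq] at h1
          exact (mem_SOf (dec_g p hp m hm j hj).1).1 h1
        · rintro ⟨j, hj, hb, rfl⟩
          have h1 : D21.act σ s (enc j) ∈ D21.act σ s '' P := by
            rw [himg, P₀_eq, act_enc hp hm hσ hsm hj]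
            exact (mem_SOf (dec_g p hp m hm j hj).1).2 hb
          rcases h1 with ⟨u, hu, he⟩
          rwa [← act_inj σ s hs he]
      rw [hPeq]
      exact (comin_SOf_iff _).2 (goodB_g p m hp hm)
  refine ⟨main, ?_⟩
  rw [P₀_eq]
  exact (comin_SOf_iff _).2 mainB0
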